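/- (Two-point example) Let Ω = {ω₁, ω₂} with F its power set and 𝒞 = {∅, Ω} the trivial σ-algebra. Let P₁ = (1/3)δ_{ω₁} + (2/3)δ_{ω₂}, P₂ = (2/3)δ_{ω₁} + (1/3)δ_{ω₂}, 𝒫 = {λP₁ + (1−λ)P₂ : λ ∈ [0,1]}, ρ(ζ) = sup_{P∈𝒫} E_P[ζ], and ξ = 2·1_{{ω₁}} + 6·1_{{ω₂}}. Then ρ(ξ) = 14/3, while the minimum mean square estimator of ξ given 𝒞 (the constant c minimizing ρ((ξ−c)²)) equals 4, attained at the measure P̂ = (1/2)δ_{ω₁} + (1/2)δ_{ω₂} ∈ 𝒫. In particular, ρ(ξ|𝒞) ≠ ρ(ξ). -/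
import Mathlib


open MeasureTheory ProbabilityTheory Filter
open scoped ENNReal

/-- The two-point measure `P₁ = (1/3)δ_{ω₁} + (2/3)δ_{ω₂}` (with `ω₁ = true`, `ω₂ = false`). -/
noncomputable def exP1 : Measure Bool :=
  (1/3 : ℝ≥0∞) • Measure.dirac true + (2/3 : ℝ≥0∞) • Measure.dirac false

/-- The two-point measure `P₂ = (2/3)δ_{ω₁} + (1/3)δ_{ω₂}`. -/
noncomputable def exP2 : Measure Bool :=
  (2/3 : ℝ≥0∞) • Measure.dirac true + (1/3 : ℝ≥0∞) • Measure.dirac false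

lemma comb (x y : ℝ≥0∞) : x • exP1 + y • exP2 =
    (x * (1/3) + y * (2/3)) • Measure.dirac true +
    (x * (2/3) + y * (1/3)) • Measure.dirac false := by
  ext s hs
  simp [exP1, exP2, Measure.add_apply, mul_comm]
  ring
lemma d13 : (1/3 : ℝ≥0∞) ≠ ∞ := by simp [ENNReal.div_eq_top]
lemma d23 : (2/3 : ℝ≥0∞) ≠ ∞ := by simp [ENNReal.div_eq_top]
lemma int_two (a b : ℝ≥0∞) (ha : a ≠ ∞) (hb : b ≠ ∞) (f : Bool → ℝ) :
    ∫ ω, f ω ∂(a • Measure.dirac true + b • Measure.dirac false)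
      = a.toReal * f true + b.toReal * f false := by
  have h1 : IsFiniteMeasure (a • (Measure.dirac true : Measure Bool)) :=
    ⟨by simp [lt_top_iff_ne_top, ha]⟩
  have h2 : IsFiniteMeasure (b • (Measure.dirac false : Measure Bool)) :=
    ⟨by simp [lt_top_iff_ne_top, hb]⟩
  rw [integral_add_measure Integrable.of_finite Integrable.of_finite,
    integral_smul_measure, integral_smul_measure, integral_dirac, integral_dirac]
  simp [smul_eq_mul]
lemma intP (f : Bool → ℝ) (l : ℝ) (h0 : 0 ≤ l) (h1 : l ≤ 1) :
    ∫ ω, f ω ∂(ENNReal.ofReal l • exP1 + ENNReal.ofReal (1-l) • exP2)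
      = ((2-l)/3) * f true + ((1+l)/3) * f false := by
  have h0' : (0:ℝ) ≤ 1 - l := by linarith
  have hfin : ∀ x y : ℝ≥0∞, x ≠ ∞ → y ≠ ∞ → ∀ u v : ℝ≥0∞, u ≠ ∞ → v ≠ ∞ →
      x * u + y * v ≠ ∞ := fun x y hx hy u v hu hv =>
    ENNReal.add_ne_top.2 ⟨ENNReal.mul_ne_top hx hu, ENNReal.mul_ne_top hy hv⟩
  rw [comb, int_two _ _
    (hfin _ _ ENNReal.ofReal_ne_top ENNReal.ofReal_ne_top _ _ d13 d23)
    (hfin _ _ ENNReal.ofReal_ne_top ENNReal.ofReal_ne_top _ _ d23 d13)]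
  rw [ENNReal.toReal_add (ENNReal.mul_ne_top ENNReal.ofReal_ne_top d13)
      (ENNReal.mul_ne_top ENNReal.ofReal_ne_top d23),
    ENNReal.toReal_add (ENNReal.mul_ne_top ENNReal.ofReal_ne_top d23)
      (ENNReal.mul_ne_top ENNReal.ofReal_ne_top d13)]
  simp [ENNReal.toReal_mul, ENNReal.toReal_ofReal h0, ENNReal.toReal_ofReal h0',
    ENNReal.toReal_div]
  ring

/-- `𝒫 = {λP₁ + (1-λ)P₂ : λ ∈ [0,1]}`. -/
noncomputable def exPP : Set (Measure Bool) :=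
  {P | ∃ l ∈ Set.Icc (0:ℝ) 1, P = ENNReal.ofReal l • exP1 + ENNReal.ofReal (1 - l) • exP2}

/-- `ρ(ζ) = sup_{P∈𝒫} E_P[ζ]`. -/
noncomputable def exRho (ζ : Bool → ℝ) : ℝ := sSup ((fun P => ∫ ω, ζ ω ∂P) '' exPP)

/-- `ξ = 2·1_{ω₁} + 6·1_{ω₂}`. -/
noncomputable def exXi : Bool → ℝ := fun b => if b then 2 else 6

lemma rho_image (f : Bool → ℝ) : (fun P => ∫ ω, f ω ∂P) '' exPP
    = (fun l => ((2-l)/3) * f true + ((1+l)/3) * f false) '' Set.Icc 0 1 := by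
  ext x
  constructor
  · rintro ⟨P, ⟨l, hl, rfl⟩, rfl⟩
    exact ⟨l, hl, (intP f l hl.1 hl.2).symm⟩
  · rintro ⟨l, hl, rfl⟩
    exact ⟨_, ⟨l, hl, rfl⟩, intP f l hl.1 hl.2⟩

/-- Two-point example: `ρ(ξ) = 14/3`, while the minimum mean square
estimator of `ξ` given the trivial σ-algebra is the constant `4`, attained at the measure
`P̂ = (1/2)δ_{ω₁} + (1/2)δ_{ω₂} ∈ 𝒫`; in particular `ρ(ξ|𝒞) ≠ ρ(ξ)`. -/
theorem stmt18 :
    exRho exXi = 14/3 ∧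
    (∀ c : ℝ, exRho (fun ω => (exXi ω - 4)^2) ≤ exRho (fun ω => (exXi ω - c)^2)) ∧
    ((1/2 : ℝ≥0∞) • Measure.dirac true + (1/2 : ℝ≥0∞) • Measure.dirac false) ∈ exPP ∧
    (∫ ω, exXi ω
      ∂((1/2 : ℝ≥0∞) • Measure.dirac true + (1/2 : ℝ≥0∞) • Measure.dirac false)) = 4 ∧
    (4 : ℝ) ≠ 14/3 := by
  have half : ENNReal.toReal (1/2) = (1/2 : ℝ) := by
    simp [ENNReal.toReal_div]
  refine ⟨?_, ?_, ?_, ?_, by norm_num⟩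
  · rw [exRho, rho_image]
    apply IsGreatest.csSup_eq
    constructor
    · exact ⟨1, by norm_num, by norm_num [exXi]⟩
    · rintro x ⟨l, hl, rfl⟩
      simp only [exXi]
      norm_num
      obtain ⟨h0, h1⟩ := hl
      nlinarith
  · intro c
    have h4 : exRho (fun ω => (exXi ω - 4)^2) = 4 := by
      rw [exRho, rho_image]
      apply IsGreatest.csSup_eq
      constructor
      · exact ⟨0, by norm_num, by norm_num [exXi]⟩
      · rintro x ⟨l, hl, rfl⟩
        obtain ⟨h0, h1⟩ := hl
        simp only [exXi]
        norm_num
        nlinarith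
    rw [h4, exRho, rho_image]
    have hbdd : BddAbove ((fun l => ((2-l)/3) * ((exXi true - c)^2)
        + ((1+l)/3) * ((exXi false - c)^2)) '' Set.Icc 0 1) := by
      refine ⟨(2-c)^2 + (6-c)^2, ?_⟩
      rintro x ⟨l, hl, rfl⟩
      obtain ⟨h0, h1⟩ := hl
      simp only [exXi]
      norm_num
      nlinarith [sq_nonneg (2-c), sq_nonneg (6-c)]
    rcases le_total ((2-c)^2) ((6-c)^2) with h | h
    · refine le_trans ?_ (le_csSup hbdd ⟨1, by norm_num, rfl⟩)
      simp only [exXi]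
      norm_num
      nlinarith [sq_nonneg (c-4)]
    · refine le_trans ?_ (le_csSup hbdd ⟨0, by norm_num, rfl⟩)
      simp only [exXi]
      norm_num
      nlinarith [sq_nonneg (c-4)]
  · refine ⟨1/2, by norm_num, ?_⟩
    rw [comb]
    have e1 : ENNReal.ofReal (1/2) * (1/3) + ENNReal.ofReal (1 - 1/2) * (2/3)
        = (1/2 : ℝ≥0∞) := by
      rw [← ENNReal.toReal_eq_toReal_iff' (by
          exact ENNReal.add_ne_top.2 ⟨ENNReal.mul_ne_top ENNReal.ofReal_ne_top d13,
            ENNReal.mul_ne_top ENNReal.ofReal_ne_top d23⟩) (by simp [ENNReal.div_eq_top])]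
      rw [ENNReal.toReal_add (ENNReal.mul_ne_top ENNReal.ofReal_ne_top d13)
        (ENNReal.mul_ne_top ENNReal.ofReal_ne_top d23)]
      simp [ENNReal.toReal_mul, ENNReal.toReal_ofReal, ENNReal.toReal_div]
      norm_num
    have e2 : ENNReal.ofReal (1/2) * (2/3) + ENNReal.ofReal (1 - 1/2) * (1/3)
        = (1/2 : ℝ≥0∞) := by
      rw [← ENNReal.toReal_eq_toReal_iff' (by
          exact ENNReal.add_ne_top.2 ⟨ENNReal.mul_ne_top ENNReal.ofReal_ne_top d23,
            ENNReal.mul_ne_top ENNReal.ofReal_ne_top d13⟩) (by simp [ENNReal.div_eq_top])]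
      rw [ENNReal.toReal_add (ENNReal.mul_ne_top ENNReal.ofReal_ne_top d23)
        (ENNReal.mul_ne_top ENNReal.ofReal_ne_top d13)]
      simp [ENNReal.toReal_mul, ENNReal.toReal_ofReal, ENNReal.toReal_div]
      norm_num
    rw [e1, e2]
  · rw [int_two _ _ (by simp [ENNReal.div_eq_top]) (by simp [ENNReal.div_eq_top])]
    rw [half]
    norm_num [exXi]
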